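/- arXiv:2504.08911 — 2 statements merged into one kernel-verified Lean document; each statement's English description precedes it below -/
import Mathlib

section
/- The ideal I_∞ = ⟨ x_a² − 1, x_a x_b − x_{a∧b} x_{a∨b} : a, b ∈ [𝐧] ⟩ ⊂ ℝ[x_a : a ∈ [𝐧]] is real radical; that is, I_∞ equals the vanishing ideal of its real zero set. -/
open MvPolynomial

/-- Multi-index set `[n₁] × ⋯ × [n_d]`. -/
abbrev Idx {d : ℕ} (n : Fin d → ℕ) : Type := ∀ i, Fin (n i)

/-- Componentwise minimum of multi-indices. -/
def amin {d : ℕ} {n : Fin d → ℕ} (a b : Idx n) : Idx n := fun i => min (a i) (b i)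

/-- Componentwise maximum of multi-indices. -/
def amax {d : ℕ} {n : Fin d → ℕ} (a b : Idx n) : Idx n := fun i => max (a i) (b i)

/-- The ideal `I_∞ = ⟨x_a² − 1, x_a x_b − x_{a∧b} x_{a∨b} : a, b ∈ [𝐧]⟩`. -/
noncomputable def Iinf {d : ℕ} (n : Fin d → ℕ) : Ideal (MvPolynomial (Idx n) ℝ) :=
  Ideal.span ({f | ∃ a : Idx n, f = X a ^ 2 - 1} ∪
    {f | ∃ a b : Idx n, f = X a * X b - X (amin a b) * X (amax a b)})

namespace IinfAux

variable {d : ℕ} (n : Fin d → ℕ)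

/-- basis vector in `(Idx n) → ZMod 2`. -/
def e (a : Idx n) : Idx n → ZMod 2 := Pi.single a 1

/-- subgroup of relations. -/
def H : Submodule (ZMod 2) (Idx n → ZMod 2) :=
  Submodule.span (ZMod 2)
    {v | ∃ a b : Idx n, v = e n a + e n b + e n (amin a b) + e n (amax a b)}

abbrev G := (Idx n → ZMod 2) ⧸ H n

lemma G_add_self (g : G n) : g + g = 0 := by
  have : ((2 : ZMod 2)) • g = g + g := two_smul _ g
  have h2 : (2 : ZMod 2) = 0 := by decide
  rw [h2, zero_smul] at this
  exact this.symm

abbrev Rq := MvPolynomial (Idx n) ℝ ⧸ Iinf n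

noncomputable abbrev y (a : Idx n) : Rq n := Ideal.Quotient.mk (Iinf n) (X a)

lemma y_sq (a : Idx n) : y n a ^ 2 = 1 := by
  have h : (X a ^ 2 - 1 : MvPolynomial (Idx n) ℝ) ∈ Iinf n :=
    Ideal.subset_span (Or.inl ⟨a, rfl⟩)
  have := (Ideal.Quotient.eq_zero_iff_mem).2 h
  rw [map_sub, map_pow, map_one, sub_eq_zero] at this
  exact this

lemma y_rel (a b : Idx n) :
    y n a * y n b = y n (amin a b) * y n (amax a b) := by
  have h : (X a * X b - X (amin a b) * X (amax a b) : MvPolynomial (Idx n) ℝ) ∈ Iinf n :=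
    Ideal.subset_span (Or.inr ⟨a, b, rfl⟩)
  have := (Ideal.Quotient.eq_zero_iff_mem).2 h
  rw [map_sub, map_mul, map_mul, sub_eq_zero] at this
  exact this

lemma pow_mod_two {R : Type*} [CommMonoid R] (u : R) (hu : u ^ 2 = 1) (j : ℕ) :
    u ^ j = u ^ (j % 2) := by
  conv_lhs => rw [← Nat.mod_add_div j 2, pow_add, pow_mul, hu, one_pow, mul_one]

noncomputable def ψ0 (v : Idx n → ZMod 2) : Rq n := ∏ a, y n a ^ (v a).val

lemma ψ0_add (v w : Idx n → ZMod 2) : ψ0 n (v + w) = ψ0 n v * ψ0 n w := by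
  rw [ψ0, ψ0, ψ0, ← Finset.prod_mul_distrib]
  refine Finset.prod_congr rfl fun a _ => ?_
  rw [← pow_add, Pi.add_apply, ZMod.val_add,
    ← pow_mod_two _ (y_sq n a), pow_mod_two _ (y_sq n a) ((v a).val + (w a).val)]

lemma ψ0_zero : ψ0 n 0 = 1 := by
  simp [ψ0, ZMod.val_zero]

lemma ψ0_e (a : Idx n) : ψ0 n (e n a) = y n a := by
  rw [ψ0]
  rw [Finset.prod_eq_single a]
  · simp [e, Pi.single_eq_same, show (1 : ZMod 2).val = 1 by decide]
  · intro b _ hb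
    simp [e, Pi.single_eq_of_ne hb]
  · simp

lemma ψ0_H (v : Idx n → ZMod 2) (hv : v ∈ H n) : ψ0 n v = 1 := by
  induction hv using Submodule.span_induction with
  | mem x hx =>
    obtain ⟨a, b, rfl⟩ := hx
    rw [ψ0_add, ψ0_add, ψ0_add, ψ0_e, ψ0_e, ψ0_e, ψ0_e, y_rel]
    have := y_sq n (amin a b)
    have := y_sq n (amax a b)
    ring_nf
    rw [show y n (amin a b) ^ 2 * y n (amax a b) ^ 2 = 1 by
      rw [y_sq, y_sq, one_mul]]
  | zero => exact ψ0_zero n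
  | add x y hx hy ihx ihy => rw [ψ0_add, ihx, ihy, one_mul]
  | smul c x hx ih =>
    have hc : c = 0 ∨ c = 1 := by
      fin_cases c
      · exact Or.inl rfl
      · exact Or.inr rfl
    rcases hc with h | h
    · rw [h, zero_smul]; exact ψ0_zero n
    · rw [h, one_smul]; exact ih

noncomputable def ψg (g : G n) : Rq n :=
  Quotient.liftOn' g (ψ0 n) (by
    intro v w h
    have hmk : (Submodule.Quotient.mk v : G n) = Submodule.Quotient.mk w := Quotient.sound' h
    have hsub : v - w ∈ H n := (Submodule.Quotient.eq _).1 hmk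
    have : ψ0 n v = ψ0 n ((v - w) + w) := by rw [sub_add_cancel]
    rw [this, ψ0_add, ψ0_H n _ hsub, one_mul])

lemma ψg_mk (v : Idx n → ZMod 2) : ψg n (Submodule.Quotient.mk v) = ψ0 n v := rfl

lemma ψg_add (g h : G n) : ψg n (g + h) = ψg n g * ψg n h := by
  obtain ⟨v, rfl⟩ := Submodule.Quotient.mk_surjective _ g
  obtain ⟨w, rfl⟩ := Submodule.Quotient.mk_surjective _ h
  rw [← Submodule.Quotient.mk_add, ψg_mk, ψg_mk, ψg_mk, ψ0_add]

lemma ψg_zero : ψg n 0 = 1 := by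
  have : (0 : G n) = Submodule.Quotient.mk 0 := rfl
  rw [this, ψg_mk, ψ0_zero]

noncomputable def φ : MvPolynomial (Idx n) ℝ →ₐ[ℝ] AddMonoidAlgebra ℝ (G n) :=
  aeval fun a => AddMonoidAlgebra.single (Submodule.Quotient.mk (e n a)) 1

lemma φ_X (a : Idx n) :
    φ n (X a) = AddMonoidAlgebra.single (Submodule.Quotient.mk (e n a)) 1 := by
  simp [φ]

lemma single_one_mul (g h : G n) :
    (AddMonoidAlgebra.single g (1:ℝ)) * AddMonoidAlgebra.single h 1 =
      AddMonoidAlgebra.single (g + h) 1 := by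
  rw [AddMonoidAlgebra.single_mul_single, one_mul]

lemma ker_ge : Iinf n ≤ RingHom.ker (φ n) := by
  rw [Iinf, Ideal.span_le]
  rintro f (⟨a, rfl⟩ | ⟨a, b, rfl⟩) <;>
    simp only [SetLike.mem_coe, RingHom.mem_ker, RingHom.coe_coe, map_sub, map_pow, map_mul,
      map_one, φ_X, sub_eq_zero]
  · rw [sq, single_one_mul]
    have : (Submodule.Quotient.mk (e n a) : G n) + Submodule.Quotient.mk (e n a) = 0 :=
      G_add_self n _
    rw [this, AddMonoidAlgebra.one_def]
  · rw [single_one_mul, single_one_mul]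
    congr 1
    rw [← Submodule.Quotient.mk_add, ← Submodule.Quotient.mk_add, Submodule.Quotient.eq]
    apply Submodule.subset_span
    refine ⟨a, b, ?_⟩
    have : ∀ x w : Idx n → ZMod 2, x - w = x + w := fun x w => by
      funext i; exact CharTwo.sub_eq_add _ _
    rw [this]
    abel

noncomputable def Ψ : AddMonoidAlgebra ℝ (G n) →ₐ[ℝ] Rq n :=
  AddMonoidAlgebra.lift ℝ (Rq n) (G n)
    { toFun := fun g => ψg n (Multiplicative.toAdd g)
      map_one' := ψg_zero n
      map_mul' := fun g h => ψg_add n _ _ }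

lemma Ψ_comp_φ : (Ψ n).comp (φ n) = Ideal.Quotient.mkₐ ℝ (Iinf n) := by
  apply MvPolynomial.algHom_ext
  intro a
  rw [AlgHom.comp_apply, φ_X, Ψ, AddMonoidAlgebra.lift_single, one_smul]
  show ψg n (Submodule.Quotient.mk (e n a)) = _
  rw [ψg_mk, ψ0_e]
  rfl

lemma mem_of_φ_eq_zero (f : MvPolynomial (Idx n) ℝ) (hf : φ n f = 0) : f ∈ Iinf n := by
  have h1 : Ideal.Quotient.mkₐ ℝ (Iinf n) f = 0 := by
    rw [← Ψ_comp_φ, AlgHom.comp_apply, hf, map_zero]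
  exact (Ideal.Quotient.eq_zero_iff_mem).1 h1

/-- sign character on ZMod 2 -/
noncomputable def sgn (z : ZMod 2) : ℝ := if z = 0 then 1 else -1

lemma sgn_zero : sgn 0 = 1 := by simp [sgn]

lemma sgn_one : sgn 1 = -1 := by norm_num [sgn]

lemma sgn_add (x z : ZMod 2) : sgn (x + z) = sgn x * sgn z := by
  rcases (show ∀ y : ZMod 2, y = 0 ∨ y = 1 by decide) x with rfl | rfl <;>
  rcases (show ∀ y : ZMod 2, y = 0 ∨ y = 1 by decide) z with rfl | rfl <;>
    simp only [sgn, show ((1 : ZMod 2) + 1) = 0 by decide, add_zero, zero_add] <;>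
    norm_num [show (1 : ZMod 2) ≠ 0 by decide]

instance : Finite (G n) :=
  Finite.of_surjective _ (Submodule.Quotient.mk_surjective (H n))

noncomputable instance : Fintype (G n) := Fintype.ofFinite _

abbrev W := Module.Dual (ZMod 2) (G n)

instance : Finite (W n) :=
  Finite.of_injective (fun w => (w : G n → ZMod 2)) DFunLike.coe_injective

noncomputable instance : Fintype (W n) :=
  Fintype.ofFinite _

noncomputable def χ (w : W n) : Multiplicative (G n) →* ℝ where
  toFun := fun g => sgn (w (Multiplicative.toAdd g))
  map_one' := by
    show sgn (w 0) = 1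
    rw [map_zero, sgn_zero]
  map_mul' := fun g h => by
    show sgn (w (_ + _)) = _
    rw [map_add, sgn_add]

noncomputable def Aw (w : W n) : AddMonoidAlgebra ℝ (G n) →ₐ[ℝ] ℝ :=
  AddMonoidAlgebra.lift ℝ ℝ (G n) (χ n w)

lemma Aw_apply (w : W n) (z : AddMonoidAlgebra ℝ (G n)) :
    Aw n w z = ∑ g : G n, z.coeff g * sgn (w g) := by
  rw [Aw, AddMonoidAlgebra.lift_apply]
  rw [Finsupp.sum_fintype]
  · rfl
  · intro g; exact zero_smul _ _

/-- the point of the variety attached to a character -/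
noncomputable def xw (w : W n) : Idx n → ℝ :=
  fun a => sgn (w (Submodule.Quotient.mk (e n a)))

lemma eval_xw (w : W n) (f : MvPolynomial (Idx n) ℝ) :
    eval (xw n w) f = Aw n w (φ n f) := by
  have h : (aeval (xw n w) : MvPolynomial (Idx n) ℝ →ₐ[ℝ] ℝ) = (Aw n w).comp (φ n) := by
    apply MvPolynomial.algHom_ext
    intro a
    rw [aeval_X, AlgHom.comp_apply, φ_X, Aw, AddMonoidAlgebra.lift_single, one_smul]
    rfl
  have h2 : aeval (xw n w) f = (Aw n w) (φ n f) := by rw [h]; rfl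
  rw [← h2, aeval_def, eval]
  simp [eval₂Hom, algebraMap]

lemma xw_zeros (w : W n) : ∀ g ∈ Iinf n, eval (xw n w) g = 0 := by
  intro g hg
  rw [eval_xw]
  have : φ n g = 0 := ker_ge n hg
  rw [this, map_zero]

lemma neg_self (k : G n) : -k = k := by
  rw [neg_eq_iff_add_eq_zero]; exact G_add_self n k

lemma sum_sgn_ne (k : G n) (hk : k ≠ 0) : ∑ w : W n, sgn (w k) = 0 := by
  have h₀ : ∃ w₀ : W n, w₀ k ≠ 0 := by
    by_contra h
    push_neg at h
    exact hk ((Module.forall_dual_apply_eq_zero_iff (ZMod 2) k).1 h)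
  obtain ⟨w₀, hw₀⟩ := h₀
  have h1 : w₀ k = 1 := (show ∀ z : ZMod 2, z ≠ 0 → z = 1 by decide) _ hw₀
  have hswap : ∑ w : W n, sgn (w k) = ∑ w : W n, sgn ((w + w₀) k) := by
    refine Fintype.sum_equiv (Equiv.addRight w₀).symm _ _ fun w => ?_
    simp
  have hneg : ∀ w : W n, sgn ((w + w₀) k) = -sgn (w k) := by
    intro w
    rw [LinearMap.add_apply, sgn_add, h1, sgn_one, mul_neg, mul_one]
  rw [hswap]
  have : ∑ w : W n, sgn ((w + w₀) k) = -∑ w : W n, sgn (w k) := by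
    rw [← Finset.sum_neg_distrib]
    exact Finset.sum_congr rfl fun w _ => hneg w
  rw [this] at hswap ⊢
  linarith [hswap]

lemma sum_sgn_zero' : ∑ w : W n, sgn (w (0 : G n)) = (Fintype.card (W n) : ℝ) := by
  rw [Finset.sum_congr rfl fun w _ => by rw [map_zero, sgn_zero]]
  simp

lemma φ_eq_zero (f : MvPolynomial (Idx n) ℝ)
    (hev : ∀ w : W n, Aw n w (φ n f) = 0) : φ n f = 0 := by
  set z := φ n f with hz
  have key : ∀ h : G n, z.coeff h * (Fintype.card (W n) : ℝ) = 0 := by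
    intro h
    have S1 : ∑ w : W n, sgn (w h) * Aw n w z = 0 := by
      rw [Finset.sum_congr rfl fun w _ => by rw [hev w, mul_zero]]
      simp
    have S2 : ∑ w : W n, sgn (w h) * Aw n w z
        = ∑ g : G n, z.coeff g * ∑ w : W n, sgn (w (h + g)) := by
      rw [Finset.sum_congr rfl fun w (_ : w ∈ Finset.univ) => by
        rw [Aw_apply, Finset.mul_sum]]
      rw [Finset.sum_comm]
      refine Finset.sum_congr rfl fun g _ => ?_
      rw [Finset.mul_sum]
      refine Finset.sum_congr rfl fun w _ => ?_
      rw [map_add, sgn_add]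
      ring
    have S3 : ∑ g : G n, z.coeff g * ∑ w : W n, sgn (w (h + g))
        = z.coeff h * (Fintype.card (W n) : ℝ) := by
      rw [Finset.sum_eq_single h]
      · rw [show h + h = (0 : G n) from G_add_self n h, sum_sgn_zero']
      · intro g _ hg
        have : h + g ≠ 0 := by
          intro hc
          apply hg
          have hgh : g = -h := eq_neg_iff_add_eq_zero.2 (by rw [add_comm]; exact hc)
          rw [hgh, neg_self]
        rw [sum_sgn_ne n _ this, mul_zero]
      · intro hc
        exact absurd (Finset.mem_univ h) hc
    rw [S2, S3] at S1
    exact S1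
  have hcard : (Fintype.card (W n) : ℝ) ≠ 0 := by
    have : 0 < Fintype.card (W n) := Fintype.card_pos_iff.2 ⟨0⟩
    positivity
  ext g
  have := key g
  rcases mul_eq_zero.1 this with h | h
  · exact h
  · exact absurd h hcard

end IinfAux

/-- `I_∞` is real radical: it equals the vanishing ideal of its real zero set, i.e.
a polynomial lies in `I_∞` iff it vanishes on all real common zeros of `I_∞`. -/
theorem Iinf_realRadical {d : ℕ} (n : Fin d → ℕ) (f : MvPolynomial (Idx n) ℝ) :
    f ∈ Iinf n ↔
      ∀ x : Idx n → ℝ, (∀ g ∈ Iinf n, eval x g = 0) → eval x f = 0 := by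
  constructor
  · intro hf x hx
    exact hx f hf
  · intro hv
    apply IinfAux.mem_of_φ_eq_zero
    apply IinfAux.φ_eq_zero
    intro w
    rw [← IinfAux.eval_xw]
    exact hv (IinfAux.xw n w) (IinfAux.xw_zeros n w)
end

section
/- The binomial ideal I₀ = ⟨ x_a x_b − x_{a∧b} x_{a∨b} : a, b ∈ [𝐧] ⟩ ⊂ ℝ[x_a : a ∈ [𝐧]] is real radical: if a sum of squares Σ_{i=1}^l f_i² lies in I₀, then every f_i lies in I₀. -/
open MvPolynomial

/-- The rank-1 binomial ideal `I₀ = ⟨x_a x_b − x_{a∧b} x_{a∨b} : a, b ∈ [𝐧]⟩`. -/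
noncomputable def I0 {d : ℕ} (n : Fin d → ℕ) : Ideal (MvPolynomial (Idx n) ℝ) :=
  Ideal.span {f | ∃ a b : Idx n, f = X a * X b - X (amin a b) * X (amax a b)}

namespace I0aux
variable {d : ℕ} {n : Fin d → ℕ}

abbrev Var (n : Fin d → ℕ) := Option ((i : Fin d) × Fin (n i))

noncomputable def eIdx (a : Idx n) : Var n →₀ ℕ :=
  Finsupp.single none 1 + ∑ i, Finsupp.single (some ⟨i, a i⟩) 1

def liftA {N : Type*} [AddCommMonoid N] (g : Idx n → N) : ((Idx n) →₀ ℕ) →+ N where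
  toFun u := u.sum fun a k => k • g a
  map_zero' := Finsupp.sum_zero_index
  map_add' u v := by
    exact Finsupp.sum_add_index' (fun a => zero_smul ℕ (g a)) (fun a k₁ k₂ => add_smul k₁ k₂ (g a))

lemma liftA_single {N : Type*} [AddCommMonoid N] (g : Idx n → N) (a : Idx n) (k : ℕ) :
    liftA g (Finsupp.single a k) = k • g a := by
  show (Finsupp.single a k).sum (fun a k => k • g a) = k • g a
  exact Finsupp.sum_single_index (zero_smul ℕ (g a))

noncomputable def Acount : ((Idx n) →₀ ℕ) →+ (Var n →₀ ℕ) := liftA eIdx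

def wt (a : Idx n) : ℕ := ∑ i, (a i : ℕ)

def Mmeas : ((Idx n) →₀ ℕ) →+ ℕ := liftA fun a => (wt a)^2
def degm : ((Idx n) →₀ ℕ) →+ ℕ := liftA fun _ => 1

noncomputable def phi (n : Fin d → ℕ) : MvPolynomial (Idx n) ℝ →ₐ[ℝ] MvPolynomial (Var n) ℝ :=
  aeval fun a => monomial (eIdx a) 1

lemma eIdx_min_max (a b : Idx n) :
    eIdx (amin a b) + eIdx (amax a b) = eIdx a + eIdx b := by
  unfold eIdx
  have : ∀ i : Fin d,
      Finsupp.single (α := Var n) (some ⟨i, (amin a b) i⟩) 1 +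
        Finsupp.single (some ⟨i, (amax a b) i⟩) 1 =
      Finsupp.single (some ⟨i, a i⟩) 1 + Finsupp.single (some ⟨i, b i⟩) 1 := by
    intro i
    rcases le_total (a i) (b i) with h | h
    · simp [amin, amax, min_eq_left h, max_eq_right h, add_comm]
    · simp [amin, amax, min_eq_right h, max_eq_left h, add_comm]
  calc ((Finsupp.single (α := Var n) none 1) + ∑ i, Finsupp.single (some ⟨i, (amin a b) i⟩) 1) +
      ((Finsupp.single none 1) + ∑ i, Finsupp.single (some ⟨i, (amax a b) i⟩) 1)
      = (Finsupp.single none 1 + Finsupp.single none 1) +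
        ∑ i, (Finsupp.single (α := Var n) (some ⟨i, (amin a b) i⟩) 1 +
          Finsupp.single (some ⟨i, (amax a b) i⟩) 1) := by
        rw [Finset.sum_add_distrib]; abel
    _ = (Finsupp.single none 1 + Finsupp.single none 1) +
        ∑ i, (Finsupp.single (α := Var n) (some ⟨i, a i⟩) 1 +
          Finsupp.single (some ⟨i, b i⟩) 1) := by
        rw [Finset.sum_congr rfl fun i _ => this i]
    _ = _ := by rw [Finset.sum_add_distrib]; abel

lemma prod_monomial {ι : Type*} (s : Finset ι) (g : ι → (Var n →₀ ℕ)) :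
    (∏ i ∈ s, monomial (g i) (1 : ℝ)) = monomial (∑ i ∈ s, g i) 1 := by
  classical
  induction s using Finset.induction with
  | empty => simp
  | insert _ _ h ih => simp [Finset.prod_insert h, Finset.sum_insert h, ih, monomial_mul]

lemma phi_monomial (u : (Idx n) →₀ ℕ) (c : ℝ) :
    phi n (monomial u c) = monomial (Acount u) c := by
  classical
  induction u using Finsupp.induction with
  | zero => simp [phi, Acount, monomial_zero', aeval_C, algebraMap_eq]
  | single_add a k u ha hk ih =>
    have h1 : monomial (Finsupp.single a k + u) c =
        monomial (Finsupp.single a k) (1 : ℝ) * monomial u c := by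
      rw [monomial_mul, one_mul]
    rw [h1, map_mul, ih, ← X_pow_eq_monomial, map_pow]
    have h2 : phi n (X a) = monomial (eIdx a) (1 : ℝ) := aeval_X _ a
    rw [h2, monomial_pow, one_pow, monomial_mul, one_mul, map_add, Acount, liftA_single]


def IsChainE (u : (Idx n) →₀ ℕ) : Prop :=
  ∀ a ∈ u.support, ∀ b ∈ u.support, a ≤ b ∨ b ≤ a

lemma decomp (u : (Idx n) →₀ ℕ) (a b : Idx n) (hab : a ≠ b)
    (ha : a ∈ u.support) (hb : b ∈ u.support) :
    u = (u - Finsupp.single a 1 - Finsupp.single b 1) + Finsupp.single a 1 + Finsupp.single b 1 := by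
  have ha' : 1 ≤ u a := Nat.one_le_iff_ne_zero.2 (Finsupp.mem_support_iff.1 ha)
  have hb' : 1 ≤ u b := Nat.one_le_iff_ne_zero.2 (Finsupp.mem_support_iff.1 hb)
  ext x
  simp only [Finsupp.add_apply, Finsupp.tsub_apply, Finsupp.single_apply]
  by_cases hxa : a = x
  · subst hxa
    rw [if_pos rfl, if_neg (fun h => hab h.symm)]
    omega
  · rw [if_neg hxa]
    by_cases hxb : b = x
    · subst hxb
      rw [if_pos rfl]
      omega
    · rw [if_neg hxb]
      omega

lemma monomial_add_single (w : (Idx n) →₀ ℕ) (a b : Idx n) :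
    monomial (w + Finsupp.single a 1 + Finsupp.single b 1) (1:ℝ) =
      monomial w 1 * (X a * X b) := by
  rw [X, X, monomial_mul, monomial_mul]
  simp [add_assoc]

lemma swap_mem (w : (Idx n) →₀ ℕ) (a b : Idx n) :
    monomial (w + Finsupp.single a 1 + Finsupp.single b 1) (1:ℝ) -
      monomial (w + Finsupp.single (amin a b) 1 + Finsupp.single (amax a b) 1) 1 ∈ I0 n := by
  rw [monomial_add_single, monomial_add_single, ← mul_sub]
  exact Ideal.mul_mem_left _ _ (Ideal.subset_span ⟨a, b, rfl⟩)

lemma wt_lt_wt_amax_left (a b : Idx n) (h : ¬ b ≤ a) : wt a < wt (amax a b) := by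
  rw [Pi.le_def] at h; push_neg at h
  obtain ⟨i, hi⟩ := h
  refine Finset.sum_lt_sum (fun j _ => ?_) ⟨i, Finset.mem_univ i, ?_⟩
  · exact Fin.le_def.1 (le_max_left (a j) (b j))
  · have h2 : amax a b i = b i := max_eq_right hi.le
    rw [h2]; exact Fin.lt_def.1 hi

lemma wt_lt_wt_amax_right (a b : Idx n) (h : ¬ a ≤ b) : wt b < wt (amax a b) := by
  rw [Pi.le_def] at h; push_neg at h
  obtain ⟨i, hi⟩ := h
  refine Finset.sum_lt_sum (fun j _ => ?_) ⟨i, Finset.mem_univ i, ?_⟩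
  · exact Fin.le_def.1 (le_max_right (a j) (b j))
  · have h2 : amax a b i = a i := max_eq_left hi.le
    rw [h2]; exact Fin.lt_def.1 hi

lemma wt_min_max (a b : Idx n) : wt (amin a b) + wt (amax a b) = wt a + wt b := by
  unfold wt
  rw [← Finset.sum_add_distrib, ← Finset.sum_add_distrib]
  refine Finset.sum_congr rfl fun i _ => ?_
  rcases le_total (a i) (b i) with h | h
  · simp [amin, amax, min_eq_left h, max_eq_right h]
  · simp [amin, amax, min_eq_right h, max_eq_left h, add_comm]

lemma sq_sum_lt (s t p q : ℕ) (hpq : p + q = s + t) (hs : s < q) (ht : t < q) :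
    s^2 + t^2 < p^2 + q^2 := by
  zify at *
  nlinarith [mul_pos (by linarith : (0:ℤ) < q - s) (by linarith : (0:ℤ) < q - t)]

lemma wt_le (a : Idx n) : wt a ≤ ∑ i, n i :=
  Finset.sum_le_sum fun i _ => (a i).isLt.le

lemma Mmeas_le (u : (Idx n) →₀ ℕ) : Mmeas u ≤ degm u * (∑ i, n i)^2 := by
  have : degm u * (∑ i, n i)^2 = u.sum fun _ k => k * (∑ i, n i)^2 := by
    rw [degm, liftA]
    simp only [AddMonoidHom.coe_mk, ZeroHom.coe_mk, Finsupp.sum, Finset.sum_mul]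
    refine Finset.sum_congr rfl fun a _ => by simp [smul_eq_mul]
  rw [this, Mmeas, liftA]
  simp only [AddMonoidHom.coe_mk, ZeroHom.coe_mk, Finsupp.sum]
  refine Finset.sum_le_sum fun a _ => ?_
  simp only [smul_eq_mul]
  exact Nat.mul_le_mul_left _ (Nat.pow_le_pow_left (wt_le a) 2)

lemma exists_chain (m : ℕ) : ∀ u : (Idx n) →₀ ℕ,
    degm u * (∑ i, n i)^2 + 1 - Mmeas u ≤ m →
    ∃ v, IsChainE v ∧ Acount v = Acount u ∧
      monomial u (1:ℝ) - monomial v 1 ∈ I0 n := by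
  induction m with
  | zero =>
    intro u hu
    exfalso
    have := Mmeas_le u
    omega
  | succ m ih =>
    intro u hu
    by_cases hc : IsChainE u
    · exact ⟨u, hc, rfl, by simp⟩
    · unfold IsChainE at hc
      push_neg at hc
      obtain ⟨a, ha, b, hb, hab1, hab2⟩ := hc
      have hne : a ≠ b := by rintro rfl; exact hab1 le_rfl
      set w := u - Finsupp.single a 1 - Finsupp.single b 1 with hw
      have hdec : u = w + Finsupp.single a 1 + Finsupp.single b 1 := decomp u a b hne ha hb
      set u' := w + Finsupp.single (amin a b) 1 + Finsupp.single (amax a b) 1 with hu'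
      have hA : Acount u' = Acount u := by
        rw [hu', hdec]
        simp only [map_add, Acount, liftA_single, one_smul]
        rw [add_assoc, add_assoc, eIdx_min_max]
      have hdeg : degm u' = degm u := by
        rw [hu', hdec]; simp [degm, map_add, liftA_single]
      have hM : Mmeas u < Mmeas u' := by
        rw [hu', hdec]
        simp only [map_add, Mmeas, liftA_single, smul_eq_mul, one_mul]
        have h1 := wt_lt_wt_amax_left a b hab2
        have h2 := wt_lt_wt_amax_right a b hab1
        have h3 := wt_min_max a b
        have := sq_sum_lt (wt a) (wt b) (wt (amin a b)) (wt (amax a b)) h3 h1 h2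
        omega
      have hm' : degm u' * (∑ i, n i)^2 + 1 - Mmeas u' ≤ m := by
        have := Mmeas_le u'
        rw [hdeg] at this ⊢
        omega
      obtain ⟨v, hv1, hv2, hv3⟩ := ih u' hm'
      refine ⟨v, hv1, hv2.trans hA, ?_⟩
      have hswap : monomial u (1:ℝ) - monomial u' 1 ∈ I0 n := by
        rw [hdec, hu']; exact swap_mem w a b
      have := Ideal.add_mem _ hswap hv3
      simpa using this


lemma eIdx_none (a : Idx n) : eIdx a none = 1 := by
  simp [eIdx, Finsupp.single_apply, Finset.sum_apply']

lemma eIdx_some (a : Idx n) (i : Fin d) (c : Fin (n i)) :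
    eIdx a (some ⟨i, c⟩) = if a i = c then 1 else 0 := by
  rw [eIdx, Finsupp.add_apply, Finsupp.single_apply, if_neg (by simp), zero_add,
    Finset.sum_apply']
  rw [Finset.sum_eq_single i]
  · by_cases h : a i = c
    · simp [h]
    · rw [if_neg h]
      refine Finsupp.single_eq_of_ne ?_
      simp only [ne_eq, Option.some.injEq]
      intro hcon
      exact h (by simpa using (Sigma.mk.inj_iff.1 hcon).2.symm)
  · intro j _ hj
    refine Finsupp.single_eq_of_ne ?_
    simp only [ne_eq, Option.some.injEq]
    intro hcon
    exact hj (Sigma.mk.inj_iff.1 hcon).1.symm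
  · intro h
    exact absurd (Finset.mem_univ i) h

lemma Acount_apply (u : (Idx n) →₀ ℕ) (x : Var n) :
    Acount u x = ∑ a ∈ u.support, u a * eIdx a x := by
  rw [Acount, liftA]
  simp only [AddMonoidHom.coe_mk, ZeroHom.coe_mk]
  rw [Finsupp.sum_apply]
  simp [Finsupp.sum, Finsupp.smul_apply]

lemma Acount_none (u : (Idx n) →₀ ℕ) : Acount u none = degm u := by
  rw [Acount_apply]
  rw [degm, liftA]
  simp [Finsupp.sum, eIdx_none]

lemma degm_eq_zero {u : (Idx n) →₀ ℕ} (h : degm u = 0) : u = 0 := by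
  rw [degm, liftA] at h
  simp only [AddMonoidHom.coe_mk, ZeroHom.coe_mk, smul_eq_mul, mul_one, Finsupp.sum] at h
  ext a
  by_contra ha
  have ha' : a ∈ u.support := Finsupp.mem_support_iff.2 ha
  have := Finset.sum_eq_zero_iff.1 h a ha'
  exact ha this

lemma Acount_pos (u : (Idx n) →₀ ℕ) {a : Idx n} (ha : a ∈ u.support) (i : Fin d) :
    Acount u (some ⟨i, a i⟩) ≠ 0 := by
  rw [Acount_apply]
  intro h
  have := Finset.sum_eq_zero_iff.1 h a ha
  rw [eIdx_some, if_pos rfl, mul_one] at this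
  exact Finsupp.mem_support_iff.1 ha this

lemma Acount_bound (u : (Idx n) →₀ ℕ) {i : Fin d} {m : Fin (n i)}
    (hm : ∀ b ∈ u.support, b i ≤ m) {c : Fin (n i)}
    (hc : Acount u (some ⟨i, c⟩) ≠ 0) : c ≤ m := by
  by_contra hcm
  apply hc
  rw [Acount_apply]
  refine Finset.sum_eq_zero fun b hb => ?_
  rw [eIdx_some, if_neg, mul_zero]
  intro hbc
  exact hcm (hbc ▸ hm b hb)

lemma chain_max {u : (Idx n) →₀ ℕ} (hc : IsChainE u) (hne : u ≠ 0) :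
    ∃ a ∈ u.support, ∀ b ∈ u.support, b ≤ a := by
  obtain ⟨a, ha, hmax⟩ : ∃ a ∈ u.support, ∀ b ∈ u.support, ¬ a < b := by
    obtain ⟨a, ha, hm⟩ := Finset.exists_maximal (Finsupp.support_nonempty_iff.2 hne)
    exact ⟨a, ha, fun b hb hab => absurd (hm hb hab.le) (not_le_of_gt hab)⟩
  refine ⟨a, ha, fun b hb => ?_⟩
  rcases hc a ha b hb with h | h
  · rcases eq_or_lt_of_le h with h' | h'
    · exact h'.ge
    · exact absurd h' (hmax b hb)
  · exact h

lemma chain_unique : ∀ (k : ℕ) (u v : (Idx n) →₀ ℕ), degm u = k →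
    IsChainE u → IsChainE v → Acount u = Acount v → u = v := by
  intro k
  induction k with
  | zero =>
    intro u v hk _ _ hA
    have hu : u = 0 := degm_eq_zero hk
    have hv : degm v = 0 := by rw [← Acount_none, ← hA, Acount_none, hk]
    rw [hu, degm_eq_zero hv]
  | succ k ih =>
    intro u v hk hcu hcv hA
    have hune : u ≠ 0 := fun h => by simp [h] at hk
    have hdv : degm v = k + 1 := by rw [← Acount_none, ← hA, Acount_none, hk]
    have hvne : v ≠ 0 := fun h => by simp [h, map_zero] at hdv
    obtain ⟨a, ha, hamax⟩ := chain_max hcu hune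
    obtain ⟨a', ha', hamax'⟩ := chain_max hcv hvne
    have haa : a = a' := by
      funext i
      refine le_antisymm ?_ ?_
      · exact Acount_bound v (fun b hb => (hamax' b hb) i) (hA ▸ Acount_pos u ha i)
      · exact Acount_bound u (fun b hb => (hamax b hb) i) (hA.symm ▸ Acount_pos v ha' i)
    subst haa
    have hua : 1 ≤ u a := Nat.one_le_iff_ne_zero.2 (Finsupp.mem_support_iff.1 ha)
    have hva : 1 ≤ v a := Nat.one_le_iff_ne_zero.2 (Finsupp.mem_support_iff.1 ha')
    set u₁ := u - Finsupp.single a 1 with hu₁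
    set v₁ := v - Finsupp.single a 1 with hv₁
    have hud : u = u₁ + Finsupp.single a 1 := by
      ext x
      simp only [hu₁, Finsupp.add_apply, Finsupp.tsub_apply, Finsupp.single_apply]
      by_cases hx : a = x
      · subst hx; rw [if_pos rfl]; omega
      · rw [if_neg hx]; omega
    have hvd : v = v₁ + Finsupp.single a 1 := by
      ext x
      simp only [hv₁, Finsupp.add_apply, Finsupp.tsub_apply, Finsupp.single_apply]
      by_cases hx : a = x
      · subst hx; rw [if_pos rfl]; omega
      · rw [if_neg hx]; omega
    have hcu₁ : IsChainE u₁ := fun x hx y hy =>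
      hcu x (Finsupp.support_tsub hx) y (Finsupp.support_tsub hy)
    have hcv₁ : IsChainE v₁ := fun x hx y hy =>
      hcv x (Finsupp.support_tsub hx) y (Finsupp.support_tsub hy)
    have hdeg₁ : degm u₁ = k := by
      have : degm u = degm u₁ + degm (Finsupp.single a 1) := by rw [hud, map_add]
      rw [hk] at this
      have h1 : degm (Finsupp.single a (1:ℕ)) = 1 := by
        rw [degm, liftA_single]; simp
      omega
    have hA₁ : Acount u₁ = Acount v₁ := by
      have h1 : Acount u₁ + Acount (Finsupp.single a 1) =
          Acount v₁ + Acount (Finsupp.single a 1) := by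
        rw [← map_add, ← map_add, ← hud, ← hvd, hA]
      exact add_right_cancel h1
    have := ih u₁ v₁ hdeg₁ hcu₁ hcv₁ hA₁
    rw [hud, hvd, this]


lemma phi_I0 (p : MvPolynomial (Idx n) ℝ) (hp : p ∈ I0 n) : phi n p = 0 := by
  have hle : I0 n ≤ RingHom.ker (phi n).toRingHom := by
    rw [I0, Ideal.span_le]
    rintro x ⟨a, b, rfl⟩
    simp only [SetLike.mem_coe, RingHom.mem_ker, AlgHom.toRingHom_eq_coe, RingHom.coe_coe]
    rw [map_sub, map_mul, map_mul]
    have hX : ∀ c : Idx n, phi n (X c) = monomial (eIdx c) 1 := fun c => aeval_X _ c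
    rw [hX, hX, hX, hX, monomial_mul, monomial_mul, eIdx_min_max, sub_self]
  exact hle hp

lemma mem_I0_of_phi (p : MvPolynomial (Idx n) ℝ) (hp : phi n p = 0) : p ∈ I0 n := by
  classical
  have hex : ∀ u : (Idx n) →₀ ℕ, ∃ v, IsChainE v ∧ Acount v = Acount u ∧
      monomial u (1:ℝ) - monomial v 1 ∈ I0 n :=
    fun u => exists_chain _ u le_rfl
  choose nf h1 h2 h3 using hex
  set g : MvPolynomial (Idx n) ℝ := ∑ u ∈ p.support, monomial (nf u) (coeff u p) with hg
  have hpg : p - g ∈ I0 n := by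
    rw [← support_sum_monomial_coeff p, hg, ← Finset.sum_sub_distrib]
    refine Ideal.sum_mem _ fun u hu => ?_
    have heq : monomial u (coeff u p) - monomial (nf u) (coeff u p) =
        C (coeff u p) * (monomial u 1 - monomial (nf u) 1) := by
      rw [mul_sub, C_mul_monomial, C_mul_monomial, mul_one]
    rw [heq]
    exact Ideal.mul_mem_left _ _ (h3 u)
  have hg0 : phi n g = 0 := by
    have h4 : phi n (p - g) = 0 := phi_I0 _ hpg
    rw [map_sub, hp, zero_sub, neg_eq_zero] at h4
    exact h4
  have hgchain : ∀ v ∈ g.support, IsChainE v := by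
    intro v hv
    rw [hg] at hv
    have hsub := MvPolynomial.support_sum (s := p.support)
      (f := fun u => monomial (nf u) (coeff u p)) hv
    obtain ⟨u, _, hu⟩ := Finset.mem_biUnion.1 hsub
    have := support_monomial_subset hu
    rw [Finset.mem_singleton] at this
    rw [this]
    exact h1 u
  have hgz : g = 0 := by
    rw [MvPolynomial.eq_zero_iff]
    intro v
    by_cases hv : v ∈ g.support
    · have hgs : phi n g = ∑ w ∈ g.support, monomial (Acount w) (coeff w g) := by
        conv_lhs => rw [← support_sum_monomial_coeff g]
        rw [map_sum]
        exact Finset.sum_congr rfl fun w _ => phi_monomial _ _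
      have hcoeff : coeff (Acount v) (phi n g) = coeff v g := by
        rw [hgs, coeff_sum]
        rw [Finset.sum_eq_single_of_mem v hv]
        · rw [coeff_monomial, if_pos rfl]
        · intro w hw hwv
          rw [coeff_monomial, if_neg]
          intro hAeq
          exact hwv (chain_unique (degm w) w v rfl (hgchain w hw) (hgchain v hv) hAeq)
      rw [hg0] at hcoeff
      simpa using hcoeff.symm
    · exact MvPolynomial.notMem_support_iff.1 hv
  rw [hgz, sub_zero] at hpg
  exact hpg

end I0aux

/-- `I₀` is real radical: if a sum of squares `Σ_{i=1}^l f_i²` lies in `I₀`, then every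
`f_i` lies in `I₀`. -/
theorem I0_realRadical {d : ℕ} (n : Fin d → ℕ) (l : ℕ)
    (f : Fin l → MvPolynomial (Idx n) ℝ)
    (hsum : (∑ i, (f i) ^ 2) ∈ I0 n) :
    ∀ i, f i ∈ I0 n := by
  intro i
  have hker : I0aux.phi n (∑ j, (f j)^2) = 0 := I0aux.phi_I0 _ hsum
  rw [map_sum] at hker
  simp only [map_pow] at hker
  have hzero : I0aux.phi n (f i) = 0 := by
    apply MvPolynomial.funext
    intro x
    have h1 := congrArg (eval x) hker
    rw [map_sum, map_zero] at h1
    simp only [map_pow] at h1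
    have h2 : ∀ j ∈ Finset.univ, (0:ℝ) ≤ (eval x (I0aux.phi n (f j)))^2 :=
      fun j _ => sq_nonneg _
    have h3 := (Finset.sum_eq_zero_iff_of_nonneg h2).1 h1
    have h4 := h3 i (Finset.mem_univ i)
    rw [map_zero]
    exact pow_eq_zero_iff (two_ne_zero) |>.1 h4
  exact I0aux.mem_I0_of_phi _ hzero
end
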